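/- arXiv:2402.01589 — 6 statements merged into one kernel-verified Lean document; each statement's English description precedes it below -/
import Mathlib

section
/- Let P be an ipomset whose precedence order < is an interval order. Then the relation ≺ on maximal <-antichains of P, defined by U ≺ T iff U ≠ T and for all u ∈ U, t ∈ T we have ¬(t < u), is a strict linear order. -/
/-- `Q` is an antichain for the strict order `lt`. -/
def IsLtAntichain {P : Type} (lt : P → P → Prop) (Q : Set P) : Prop :=
  ∀ x ∈ Q, ∀ y ∈ Q, x ≠ y → ¬ lt x y ∧ ¬ lt y x

/-- `Q` is a maximal antichain for `lt`. -/
def IsLtMaxAntichain {P : Type} (lt : P → P → Prop) (Q : Set P) : Prop :=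
  IsLtAntichain lt Q ∧ ∀ R : Set P, IsLtAntichain lt R → Q ⊆ R → Q = R

/-- The order `≺` on (maximal) antichains: `U ≺ T` iff `U ≠ T` and no element
of `T` lies below any element of `U`. -/
def achPrec {P : Type} (lt : P → P → Prop) (U T : Set P) : Prop :=
  U ≠ T ∧ ∀ u ∈ U, ∀ t ∈ T, ¬ lt t u

/-- Let `P` be an ipomset whose precedence order `<` is an interval
order.  Then the relation `≺` on maximal `<`-antichains of `P` is a strict linear
order (irreflexive, transitive, and trichotomous on maximal antichains). -/
theorem achPrec_strict_linear_order_of_interval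
    {L P : Type} [Finite P]
    (lt eo : P → P → Prop) (lab : P → L) (S T : Set P)
    (hlt_irr : ∀ x, ¬ lt x x) (hlt_tr : ∀ x y z, lt x y → lt y z → lt x z)
    (heo_irr : ∀ x, ¬ eo x x) (heo_tr : ∀ x y z, eo x y → eo y z → eo x z)
    (htot : ∀ x y : P, x ≠ y → lt x y ∨ lt y x ∨ eo x y ∨ eo y x)
    (hS : ∀ x ∈ S, ∀ y, ¬ lt y x) (hT : ∀ x ∈ T, ∀ y, ¬ lt x y)
    (hinterval : ∀ x y z w, lt x z → lt y w → lt x w ∨ lt y z) :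
    (∀ U, IsLtMaxAntichain lt U → ¬ achPrec lt U U) ∧
    (∀ U V W, IsLtMaxAntichain lt U → IsLtMaxAntichain lt V → IsLtMaxAntichain lt W →
      achPrec lt U V → achPrec lt V W → achPrec lt U W) ∧
    (∀ U V, IsLtMaxAntichain lt U → IsLtMaxAntichain lt V →
      U = V ∨ achPrec lt U V ∨ achPrec lt V U) := by
  refine ⟨?_, ?_, ?_⟩
  · rintro U _ ⟨hne, _⟩; exact hne rfl
  · rintro U V W hU hV hW ⟨hUV, hUVp⟩ ⟨hVW, hVWp⟩
    constructor
    · rintro rfl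
      -- then U ≺ V and V ≺ U, so U ∪ V is an antichain
      have hac : IsLtAntichain lt (U ∪ V) := by
        rintro x (hx | hx) y (hy | hy) hxy
        · exact hU.1 x hx y hy hxy
        · exact ⟨fun h => hVWp y hy x hx h, fun h => hUVp x hx y hy h⟩
        · exact ⟨fun h => hUVp y hy x hx h, fun h => hVWp x hx y hy h⟩
        · exact hV.1 x hx y hy hxy
      have h1 : U = U ∪ V := hU.2 _ hac (Set.subset_union_left)
      have h2 : V = U ∪ V := hV.2 _ hac (Set.subset_union_right)
      exact hUV (h1.trans h2.symm)
    · intro u hu w hw hwu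
      by_cases hwV : w ∈ V
      · exact hUVp u hu w hwV hwu
      · -- w is comparable to some v ∈ V by maximality of V
        have : ∃ v ∈ V, lt v w ∨ lt w v := by
          by_contra hc
          push_neg at hc
          have hac : IsLtAntichain lt (V ∪ {w}) := by
            rintro x (hx | rfl) y (hy | rfl) hxy
            · exact hV.1 x hx y hy hxy
            · exact ⟨(hc x hx).1, (hc x hx).2⟩
            · exact ⟨(hc y hy).2, (hc y hy).1⟩
            · exact absurd rfl hxy
          have := hV.2 _ hac (Set.subset_union_left)
          exact hwV (this ▸ Set.mem_union_right V rfl)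
        obtain ⟨v, hv, hvw | hwv⟩ := this
        · exact hUVp u hu v hv (hlt_tr v w u hvw hwu)
        · exact hVWp v hv w hw hwv
  · intro U V hU hV
    by_cases hUV : U = V
    · exact Or.inl hUV
    right
    by_contra hc
    push_neg at hc
    obtain ⟨h1, h2⟩ := hc
    simp only [achPrec, not_and, not_forall, not_not] at h1 h2
    obtain ⟨u, hu, v, hv, hvu⟩ := h1 hUV
    obtain ⟨v', hv', u', hu', hu'v'⟩ := h2 (Ne.symm hUV)
    rcases hinterval v u' u v' hvu hu'v' with h | h
    · rcases eq_or_ne v v' with rfl | hne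
      · exact hlt_irr v h
      · exact (hV.1 v hv v' hv' hne).1 h
    · rcases eq_or_ne u' u with rfl | hne
      · exact hlt_irr u' h
      · exact (hU.1 u' hu' u hu hne).1 h
end

section
/- A finite strict partial order (P, <) is an interval order (i.e., x < z and y < w imply x < w or y < z) if and only if the relation ≺ on its maximal antichains, given by U ≺ T iff U ≠ T and no element of T is below any element of U, is a linear order. -/
/-- Every antichain in a finite poset extends to a maximal antichain. -/
lemma exists_max_superset {P : Type} [Finite P] (lt : P → P → Prop)
    (Q : Set P) (hQ : IsLtAntichain lt Q) :
    ∃ U, IsLtMaxAntichain lt U ∧ Q ⊆ U := by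
  have hfin : ({R | IsLtAntichain lt R ∧ Q ⊆ R} : Set (Set P)).Finite :=
    Set.finite_univ.subset (Set.subset_univ _)
  obtain ⟨U, hU, hmax⟩ := Set.Finite.exists_maximalFor id
    {R | IsLtAntichain lt R ∧ Q ⊆ R} hfin ⟨Q, hQ, subset_rfl⟩
  exact ⟨U, ⟨hU.1, fun R hR hUR => le_antisymm hUR (hmax ⟨hR, hU.2.trans hUR⟩ hUR)⟩, hU.2⟩

/-- Every element is in, or comparable to an element of, a maximal antichain. -/
lemma mem_or_comparable {P : Type} (lt : P → P → Prop) {U : Set P}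
    (hU : IsLtMaxAntichain lt U) (x : P) :
    x ∈ U ∨ ∃ u ∈ U, lt x u ∨ lt u x := by
  by_contra h
  push_neg at h
  obtain ⟨hx, hcomp⟩ := h
  have hanti : IsLtAntichain lt (U ∪ {x}) := by
    rintro a (ha | rfl) b (hb | rfl) hne
    · exact hU.1 a ha b hb hne
    · exact ⟨(hcomp a ha).2, (hcomp a ha).1⟩
    · exact ⟨(hcomp b hb).1, (hcomp b hb).2⟩
    · exact absurd rfl hne
  have := hU.2 (U ∪ {x}) hanti Set.subset_union_left
  exact hx (this ▸ Set.mem_union_right U rfl)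

/-- A finite strict partial order `(P, <)` is an interval order
(i.e., `x < z` and `y < w` imply `x < w` or `y < z`) if and only if the relation
`≺` on its maximal antichains is a (strict) linear order. -/
theorem interval_iff_achPrec_linear
    {P : Type} [Finite P]
    (lt : P → P → Prop)
    (hlt_irr : ∀ x, ¬ lt x x) (hlt_tr : ∀ x y z, lt x y → lt y z → lt x z) :
    (∀ x y z w, lt x z → lt y w → lt x w ∨ lt y z) ↔
    ((∀ U, IsLtMaxAntichain lt U → ¬ achPrec lt U U) ∧
     (∀ U V W, IsLtMaxAntichain lt U → IsLtMaxAntichain lt V → IsLtMaxAntichain lt W →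
       achPrec lt U V → achPrec lt V W → achPrec lt U W) ∧
     (∀ U V, IsLtMaxAntichain lt U → IsLtMaxAntichain lt V →
       U = V ∨ achPrec lt U V ∨ achPrec lt V U)) := by
  constructor
  · intro hI
    refine ⟨fun U _ h => h.1 rfl, ?_, ?_⟩
    · -- transitivity
      rintro U V W hU hV hW ⟨hUV, hUVle⟩ ⟨hVW, hVWle⟩
      have hle : ∀ u ∈ U, ∀ w ∈ W, ¬ lt w u := by
        intro u hu w hw hlt
        rcases mem_or_comparable lt hV w with hwV | ⟨v, hv, hwv | hvw⟩
        · exact hUVle u hu w hwV hlt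
        · exact hVWle v hv w hw hwv
        · exact hUVle u hu v hv (hlt_tr v w u hvw hlt)
      refine ⟨?_, hle⟩
      rintro rfl
      have hanti : IsLtAntichain lt (U ∪ V) := by
        rintro a (ha | ha) b (hb | hb) hne
        · exact hU.1 a ha b hb hne
        · exact ⟨hVWle b hb a ha, hUVle a ha b hb⟩
        · exact ⟨hUVle b hb a ha, hVWle a ha b hb⟩
        · exact hV.1 a ha b hb hne
      have h1 := hU.2 (U ∪ V) hanti Set.subset_union_left
      have h2 := hV.2 (U ∪ V) hanti Set.subset_union_right
      exact hUV (h1.trans h2.symm)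
    · -- totality
      intro U V hU hV
      by_contra h
      push_neg at h
      obtain ⟨hne, hUV, hVU⟩ := h
      rw [achPrec] at hUV hVU
      push_neg at hUV hVU
      obtain ⟨u, hu, v, hv, hvu⟩ := hUV hne
      obtain ⟨v', hv', u', hu', hu'v'⟩ := hVU (Ne.symm hne)
      rcases hI v u' u v' hvu hu'v' with hvv' | hu'u
      · rcases eq_or_ne v v' with rfl | hvne
        · exact hlt_irr v hvv'
        · exact (hV.1 v hv v' hv' hvne).1 hvv'
      · rcases eq_or_ne u' u with rfl | hune
        · exact hlt_irr u' hu'u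
        · exact (hU.1 u' hu' u hu hune).1 hu'u
  · rintro ⟨_, _, htot⟩ x y z w hxz hyw
    by_contra h
    push_neg at h
    obtain ⟨hxw, hyz⟩ := h
    have hwx : ¬ lt w x := fun hwx => hyz (hlt_tr y w z hyw (hlt_tr w x z hwx hxz))
    have hzy : ¬ lt z y := fun hzy => hxw (hlt_tr x z w hxz (hlt_tr z y w hzy hyw))
    have hanti1 : IsLtAntichain lt {x, w} := by
      rintro a (rfl | rfl) b (rfl | rfl) hne
      · exact absurd rfl hne
      · exact ⟨hxw, hwx⟩
      · exact ⟨hwx, hxw⟩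
      · exact absurd rfl hne
    have hanti2 : IsLtAntichain lt {y, z} := by
      rintro a (rfl | rfl) b (rfl | rfl) hne
      · exact absurd rfl hne
      · exact ⟨hyz, hzy⟩
      · exact ⟨hzy, hyz⟩
      · exact absurd rfl hne
    obtain ⟨U, hU, hsub1⟩ := exists_max_superset lt _ hanti1
    obtain ⟨V, hV, hsub2⟩ := exists_max_superset lt _ hanti2
    have hxU : x ∈ U := hsub1 (Set.mem_insert x {w})
    have hwU : w ∈ U := hsub1 (Set.mem_insert_of_mem x rfl)
    have hyV : y ∈ V := hsub2 (Set.mem_insert y {z})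
    have hzV : z ∈ V := hsub2 (Set.mem_insert_of_mem y rfl)
    have hxz' : x ≠ z := fun e => hlt_irr z (e ▸ hxz)
    rcases htot U V hU hV with rfl | hUV | hVU
    · exact (hU.1 x hxU z hzV hxz').1 hxz
    · exact hUV.2 w hwU y hyV hyw
    · exact hVU.2 z hzV x hxU hxz
end

section
/- The gluing composition of ipomsets is well-defined: if P and Q are ipomsets with T_P isomorphic to S_Q via the unique isomorphism f, then P * Q, with underlying set (P ⊔ Q) quotiented by x ≃ f(x), precedence order <_P ∪ <_Q ∪ (P∖T_P)×(Q∖S_Q), event order the transitive closure of ⇢_P ∪ ⇢_Q, interfaces S_P and T_Q, is again an ipomset (the precedence relation is a strict partial order and its union with the event order is total). -/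
attribute [local instance] Classical.propDecidable

/-- The three possible states of an event. -/
inductive Tri
  | zero | ex | one

/-- A pre-ipomset: the raw data of a labelled partially ordered multiset
with interfaces over the alphabet `L`. -/
structure PreIpomset (L : Type) where
  car : Type
  lt : car → car → Prop
  eo : car → car → Prop
  lab : car → L
  S : Set car
  T : Set car

/-- `P` is an ipomset: the carrier is finite, `lt` (precedence) and `eo` (event
order) are strict partial orders whose union is total, the source interface
consists of `lt`-minimal elements and the target interface of `lt`-maximal ones. -/
def IsIpomset {L : Type} (P : PreIpomset L) : Prop :=
  Finite P.car ∧
  (∀ x, ¬ P.lt x x) ∧ (∀ x y z, P.lt x y → P.lt y z → P.lt x z) ∧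
  (∀ x, ¬ P.eo x x) ∧ (∀ x y z, P.eo x y → P.eo y z → P.eo x z) ∧
  (∀ x y, x ≠ y → P.lt x y ∨ P.lt y x ∨ P.eo x y ∨ P.eo y x) ∧
  (∀ x ∈ P.S, ∀ y, ¬ P.lt y x) ∧ (∀ x ∈ P.T, ∀ y, ¬ P.lt x y)

/-- `P` is an interval ipomset: the precedence order is an interval order. -/
def IsInterval {L : Type} (P : PreIpomset L) : Prop :=
  ∀ x y z w, P.lt x z → P.lt y w → P.lt x w ∨ P.lt y z

/-- `P` is discrete: the precedence order is empty. -/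
def IsDiscreteIpomset {L : Type} (P : PreIpomset L) : Prop := ∀ x y, ¬ P.lt x y

/-- The canonical inclusion of `Q` into the gluing `P * Q` (whose carrier is
modelled as `P.car ⊕ {q : Q.car // q ∉ Q.S}`): elements of `S_Q` are identified
with elements of `T_P` via the interface isomorphism `f`. -/
noncomputable def iotaQ {L : Type} (P Q : PreIpomset L)
    (f : {x : P.car // x ∈ P.T} ≃ {y : Q.car // y ∈ Q.S}) :
    Q.car → P.car ⊕ {q : Q.car // q ∉ Q.S} :=
  fun q => if h : q ∈ Q.S then Sum.inl (f.symm ⟨q, h⟩).1 else Sum.inr ⟨q, h⟩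

/-- The gluing composition `P * Q` of pre-ipomsets along the interface
isomorphism `f : T_P ≃ S_Q`.  The precedence order is
`<_P ∪ <_Q ∪ (P ∖ T_P) × (Q ∖ S_Q)`, the event order is the transitive closure
of `⇢_P ∪ ⇢_Q`, the source interface is `S_P` and the target interface `T_Q`. -/
noncomputable def glue {L : Type} (P Q : PreIpomset L)
    (f : {x : P.car // x ∈ P.T} ≃ {y : Q.car // y ∈ Q.S}) : PreIpomset L where
  car := P.car ⊕ {q : Q.car // q ∉ Q.S}
  lt := fun x y =>
    (∃ a b, x = Sum.inl a ∧ y = Sum.inl b ∧ P.lt a b) ∨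
    (∃ a b, x = iotaQ P Q f a ∧ y = iotaQ P Q f b ∧ Q.lt a b) ∨
    (∃ a b, x = Sum.inl a ∧ y = iotaQ P Q f b ∧ a ∉ P.T ∧ b ∉ Q.S)
  eo := Relation.TransGen (fun x y =>
    (∃ a b, x = Sum.inl a ∧ y = Sum.inl b ∧ P.eo a b) ∨
    (∃ a b, x = iotaQ P Q f a ∧ y = iotaQ P Q f b ∧ Q.eo a b))
  lab := fun x => match x with
    | Sum.inl a => P.lab a
    | Sum.inr q => Q.lab q.1
  S := Sum.inl '' P.S
  T := (iotaQ P Q f) '' Q.T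

/-- The interface isomorphism `f : T_P ≃ S_Q` is a conclist isomorphism:
it preserves the event order and the labels. -/
def GlueOK {L : Type} (P Q : PreIpomset L)
    (f : {x : P.car // x ∈ P.T} ≃ {y : Q.car // y ∈ Q.S}) : Prop :=
  (∀ a b : {x : P.car // x ∈ P.T}, P.eo a.1 b.1 ↔ Q.eo (f a).1 (f b).1) ∧
  (∀ a : {x : P.car // x ∈ P.T}, Q.lab (f a).1 = P.lab a.1)

/-- Isomorphism of pre-ipomsets: a bijection preserving precedence, event order,
labels and both interfaces. -/
def IpomIso {L : Type} (A B : PreIpomset L) : Prop :=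
  ∃ e : A.car ≃ B.car,
    (∀ x y, A.lt x y ↔ B.lt (e x) (e y)) ∧
    (∀ x y, A.eo x y ↔ B.eo (e x) (e y)) ∧
    (∀ x, B.lab (e x) = A.lab x) ∧
    (e '' A.S = B.S) ∧ (e '' A.T = B.T)

section GlueAux

variable {L : Type} (P Q : PreIpomset L)
    (f : {x : P.car // x ∈ P.T} ≃ {y : Q.car // y ∈ Q.S})

lemma iotaQ_of_mem {q : Q.car} (h : q ∈ Q.S) :
    iotaQ P Q f q = Sum.inl (f.symm ⟨q, h⟩).1 := by simp [iotaQ, h]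

lemma iotaQ_of_not_mem {q : Q.car} (h : q ∉ Q.S) :
    iotaQ P Q f q = Sum.inr ⟨q, h⟩ := by simp [iotaQ, h]

lemma iotaQ_inj : Function.Injective (iotaQ P Q f) := by
  intro a b hab
  by_cases ha : a ∈ Q.S <;> by_cases hb : b ∈ Q.S <;>
    simp [iotaQ, ha, hb] at hab
  · have h1 : f.symm ⟨a, ha⟩ = f.symm ⟨b, hb⟩ := Subtype.ext hab
    have h2 := f.symm.injective h1
    exact congrArg Subtype.val h2
  · exact hab

lemma inl_eq_iotaQ {a : P.car} {q : Q.car} (h : Sum.inl a = iotaQ P Q f q) :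
    ∃ hq : q ∈ Q.S, a = (f.symm ⟨q, hq⟩).1 := by
  by_cases hq : q ∈ Q.S
  · refine ⟨hq, ?_⟩
    rw [iotaQ_of_mem P Q f hq] at h
    exact Sum.inl.inj h
  · rw [iotaQ_of_not_mem P Q f hq] at h
    exact absurd h (by simp)

lemma iotaQ_fst (a : {x : P.car // x ∈ P.T}) :
    iotaQ P Q f (f a).1 = Sum.inl a.1 := by
  rw [iotaQ_of_mem P Q f (f a).2]
  exact congrArg Sum.inl (congrArg Subtype.val (f.symm_apply_apply a))

/-- A concrete description of the transitive closure of the union of the two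
event orders on the glued carrier. -/
def glueE : (P.car ⊕ {q : Q.car // q ∉ Q.S}) → (P.car ⊕ {q : Q.car // q ∉ Q.S}) → Prop
  | Sum.inl a, Sum.inl b => P.eo a b
  | Sum.inl a, Sum.inr q =>
      ∃ t : {x : P.car // x ∈ P.T}, (a = t.1 ∨ P.eo a t.1) ∧ Q.eo (f t).1 q.1
  | Sum.inr q, Sum.inl a =>
      ∃ t : {x : P.car // x ∈ P.T}, Q.eo q.1 (f t).1 ∧ (t.1 = a ∨ P.eo t.1 a)
  | Sum.inr q, Sum.inr q' => Q.eo q.1 q'.1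

lemma glueE_trans (hP : IsIpomset P) (hQ : IsIpomset Q) (hf : GlueOK P Q f) :
    ∀ x y z, glueE P Q f x y → glueE P Q f y z → glueE P Q f x z := by
  obtain ⟨-, -, -, -, hPeot, -, -, -⟩ := hP
  obtain ⟨-, -, -, -, hQeot, -, -, -⟩ := hQ
  intro x y z hxy hyz
  match x, y, z with
  | Sum.inl a, Sum.inl b, Sum.inl c =>
      exact hPeot a b c hxy hyz
  | Sum.inl a, Sum.inl b, Sum.inr q =>
      obtain ⟨t, hbt, htq⟩ := hyz
      refine ⟨t, Or.inr ?_, htq⟩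
      rcases hbt with rfl | h
      · exact hxy
      · exact hPeot _ _ _ hxy h
  | Sum.inl a, Sum.inr q, Sum.inl c =>
      obtain ⟨t1, hat1, ht1q⟩ := hxy
      obtain ⟨t2, hqt2, ht2c⟩ := hyz
      have h12 : P.eo t1.1 t2.1 := (hf.1 t1 t2).mpr (hQeot _ _ _ ht1q hqt2)
      have hat2 : P.eo a t2.1 := by
        rcases hat1 with rfl | h
        · exact h12
        · exact hPeot _ _ _ h h12
      show P.eo a c
      rcases ht2c with rfl | h
      · exact hat2
      · exact hPeot _ _ _ hat2 h
  | Sum.inl a, Sum.inr q, Sum.inr q' =>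
      obtain ⟨t, h1, h2⟩ := hxy
      exact ⟨t, h1, hQeot _ _ _ h2 hyz⟩
  | Sum.inr q, Sum.inl b, Sum.inl c =>
      obtain ⟨t, h1, h2⟩ := hxy
      refine ⟨t, h1, Or.inr ?_⟩
      rcases h2 with rfl | h
      · exact hyz
      · exact hPeot _ _ _ h hyz
  | Sum.inr q, Sum.inl b, Sum.inr q' =>
      obtain ⟨t1, hqt1, ht1b⟩ := hxy
      obtain ⟨t2, hbt2, ht2q'⟩ := hyz
      show Q.eo q.1 q'.1
      have h12 : t1 = t2 ∨ P.eo t1.1 t2.1 := by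
        rcases ht1b with h1 | h1
        · rcases hbt2 with h2 | h2
          · exact Or.inl (Subtype.ext (h1.trans h2))
          · exact Or.inr (h1 ▸ h2)
        · rcases hbt2 with h2 | h2
          · exact Or.inr (h2 ▸ h1)
          · exact Or.inr (hPeot _ _ _ h1 h2)
      rcases h12 with rfl | h
      · exact hQeot _ _ _ hqt1 ht2q'
      · exact hQeot _ _ _ hqt1 (hQeot _ _ _ ((hf.1 t1 t2).mp h) ht2q')
  | Sum.inr q, Sum.inr q', Sum.inl c =>
      obtain ⟨t, h1, h2⟩ := hyz
      exact ⟨t, hQeot _ _ _ hxy h1, h2⟩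
  | Sum.inr q, Sum.inr q', Sum.inr q'' =>
      exact hQeot _ _ _ hxy hyz

lemma glueR_sub_glueE (hf : GlueOK P Q f) : ∀ x y,
    ((∃ a b, x = Sum.inl a ∧ y = Sum.inl b ∧ P.eo a b) ∨
     (∃ a b, x = iotaQ P Q f a ∧ y = iotaQ P Q f b ∧ Q.eo a b)) →
    glueE P Q f x y := by
  rintro x y (⟨a, b, rfl, rfl, h⟩ | ⟨a, b, rfl, rfl, h⟩)
  · exact h
  · by_cases ha : a ∈ Q.S <;> by_cases hb : b ∈ Q.S <;>
      [rw [iotaQ_of_mem P Q f ha, iotaQ_of_mem P Q f hb];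
       rw [iotaQ_of_mem P Q f ha, iotaQ_of_not_mem P Q f hb];
       rw [iotaQ_of_not_mem P Q f ha, iotaQ_of_mem P Q f hb];
       rw [iotaQ_of_not_mem P Q f ha, iotaQ_of_not_mem P Q f hb]]
    · exact (hf.1 (f.symm ⟨a, ha⟩) (f.symm ⟨b, hb⟩)).mpr (by simpa using h)
    · exact ⟨f.symm ⟨a, ha⟩, Or.inl rfl, by simpa using h⟩
    · exact ⟨f.symm ⟨b, hb⟩, by simpa using h, Or.inl rfl⟩
    · exact h

lemma glueEo_sub_glueE (hP : IsIpomset P) (hQ : IsIpomset Q) (hf : GlueOK P Q f) :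
    ∀ x y, (glue P Q f).eo x y → glueE P Q f x y := by
  intro x y h
  induction h with
  | single h => exact glueR_sub_glueE P Q f hf _ _ h
  | tail _ h2 ih => exact glueE_trans P Q f hP hQ hf _ _ _ ih (glueR_sub_glueE P Q f hf _ _ h2)

end GlueAux

/-- The gluing composition of ipomsets is well-defined: if `P` and
`Q` are ipomsets and `f : T_P ≃ S_Q` is the (unique) interface isomorphism, then
`P * Q` is again an ipomset (in particular its precedence relation is a strict
partial order and its union with the event order is total). -/
theorem glue_isIpomset {L : Type} (P Q : PreIpomset L)
    (hP : IsIpomset P) (hQ : IsIpomset Q)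
    (f : {x : P.car // x ∈ P.T} ≃ {y : Q.car // y ∈ Q.S})
    (hf : GlueOK P Q f) :
    IsIpomset (glue P Q f) := by
  obtain ⟨hPfin, hPirr, hPtr, hPeoirr, hPeotr, hPtot, hPmin, hPmax⟩ := id hP
  obtain ⟨hQfin, hQirr, hQtr, hQeoirr, hQeotr, hQtot, hQmin, hQmax⟩ := id hQ
  refine ⟨?_, ?_, ?_, ?_, ?_, ?_, ?_, ?_⟩
  · -- finiteness
    haveI := hPfin; haveI := hQfin
    exact inferInstanceAs (Finite (P.car ⊕ {q : Q.car // q ∉ Q.S}))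
  · -- lt irreflexive
    rintro x (⟨a, b, rfl, hx, h⟩ | ⟨a, b, rfl, hx, h⟩ | ⟨a, b, rfl, hx, haT, hbS⟩)
    · exact hPirr a (Sum.inl.inj hx ▸ h)
    · exact hQirr a (iotaQ_inj P Q f hx ▸ h)
    · rw [iotaQ_of_not_mem P Q f hbS] at hx
      exact absurd hx (by simp)
  · -- lt transitive
    rintro x y z
      (⟨a, b, rfl, rfl, hab⟩ | ⟨a, b, rfl, rfl, hab⟩ | ⟨a, b, rfl, rfl, haT, hbS⟩) h2 <;>
      rcases h2 with (⟨a', b', hy, rfl, hab'⟩ | ⟨a', b', hy, rfl, hab'⟩ |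
        ⟨a', b', hy, rfl, haT', hbS'⟩)
    · -- P then P
      exact Or.inl ⟨a, b', rfl, rfl, hPtr _ _ _ hab (Sum.inl.inj hy ▸ hab')⟩
    · -- P then Q
      obtain ⟨ha', hb⟩ := inl_eq_iotaQ P Q f hy
      have haT : a ∉ P.T := fun h => hPmax a h b hab
      have hb'S : b' ∉ Q.S := fun h => hQmin b' h a' hab'
      exact Or.inr (Or.inr ⟨a, b', rfl, rfl, haT, hb'S⟩)
    · -- P then mixed
      have haT : a ∉ P.T := fun h => hPmax a h b hab
      exact Or.inr (Or.inr ⟨a, b', rfl, rfl, haT, hbS'⟩)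
    · -- Q then P
      obtain ⟨hb, heq⟩ := inl_eq_iotaQ P Q f hy.symm
      exact absurd hab (hQmin b hb a)
    · -- Q then Q
      have : b = a' := iotaQ_inj P Q f hy
      exact Or.inr (Or.inl ⟨a, b', rfl, rfl, hQtr _ _ _ hab (this ▸ hab')⟩)
    · -- Q then mixed
      obtain ⟨hb, heq⟩ := inl_eq_iotaQ P Q f hy.symm
      exact absurd hab (hQmin b hb a)
    · -- mixed then P
      rw [iotaQ_of_not_mem P Q f hbS] at hy
      exact absurd hy.symm (by simp)
    · -- mixed then Q
      have hba : b = a' := iotaQ_inj P Q f hy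
      have hb'S : b' ∉ Q.S := fun h => hQmin b' h a' hab'
      exact Or.inr (Or.inr ⟨a, b', rfl, rfl, haT, hb'S⟩)
    · -- mixed then mixed
      rw [iotaQ_of_not_mem P Q f hbS] at hy
      exact absurd hy.symm (by simp)
  · -- eo irreflexive
    intro x h
    have h' := glueEo_sub_glueE P Q f hP hQ hf x x h
    match x with
    | Sum.inl a => exact hPeoirr a h'
    | Sum.inr q => exact hQeoirr q.1 h'
  · -- eo transitive
    intro x y z h1 h2
    exact Relation.TransGen.trans h1 h2
  · -- totality
    have key : ∀ (a : P.car) (q : {q : Q.car // q ∉ Q.S}),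
        (glue P Q f).lt (Sum.inl a) (Sum.inr q) ∨
        (glue P Q f).lt (Sum.inr q) (Sum.inl a) ∨
        (glue P Q f).eo (Sum.inl a) (Sum.inr q) ∨
        (glue P Q f).eo (Sum.inr q) (Sum.inl a) := by
      intro a q
      have h2 : iotaQ P Q f q.1 = Sum.inr q := iotaQ_of_not_mem P Q f q.2
      by_cases ha : a ∈ P.T
      · have h1 : iotaQ P Q f (f ⟨a, ha⟩).1 = Sum.inl a := iotaQ_fst P Q f ⟨a, ha⟩
        have hne : (f ⟨a, ha⟩).1 ≠ q.1 := fun h => q.2 (h ▸ (f ⟨a, ha⟩).2)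
        rcases hQtot _ _ hne with h | h | h | h
        · exact Or.inl (Or.inr (Or.inl ⟨(f ⟨a, ha⟩).1, q.1, h1.symm, h2.symm, h⟩))
        · exact Or.inr (Or.inl (Or.inr (Or.inl ⟨q.1, (f ⟨a, ha⟩).1, h2.symm, h1.symm, h⟩)))
        · exact Or.inr (Or.inr (Or.inl (Relation.TransGen.single
            (Or.inr ⟨(f ⟨a, ha⟩).1, q.1, h1.symm, h2.symm, h⟩))))
        · exact Or.inr (Or.inr (Or.inr (Relation.TransGen.single
            (Or.inr ⟨q.1, (f ⟨a, ha⟩).1, h2.symm, h1.symm, h⟩))))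
      · exact Or.inl (Or.inr (Or.inr ⟨a, q.1, rfl, h2.symm, ha, q.2⟩))
    intro x y hxy
    match x, y with
    | Sum.inl a, Sum.inl b =>
        have hab : a ≠ b := fun h => hxy (congrArg Sum.inl h)
        rcases hPtot a b hab with h | h | h | h
        · exact Or.inl (Or.inl ⟨a, b, rfl, rfl, h⟩)
        · exact Or.inr (Or.inl (Or.inl ⟨b, a, rfl, rfl, h⟩))
        · exact Or.inr (Or.inr (Or.inl (Relation.TransGen.single (Or.inl ⟨a, b, rfl, rfl, h⟩))))
        · exact Or.inr (Or.inr (Or.inr (Relation.TransGen.single (Or.inl ⟨b, a, rfl, rfl, h⟩))))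
    | Sum.inl a, Sum.inr q => exact key a q
    | Sum.inr q, Sum.inl a =>
        rcases key a q with h | h | h | h
        · exact Or.inr (Or.inl h)
        · exact Or.inl h
        · exact Or.inr (Or.inr (Or.inr h))
        · exact Or.inr (Or.inr (Or.inl h))
    | Sum.inr q, Sum.inr q' =>
        have h2 : iotaQ P Q f q.1 = Sum.inr q := iotaQ_of_not_mem P Q f q.2
        have h2' : iotaQ P Q f q'.1 = Sum.inr q' := iotaQ_of_not_mem P Q f q'.2
        have hne : q.1 ≠ q'.1 := fun h => hxy (congrArg Sum.inr (Subtype.ext h))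
        rcases hQtot _ _ hne with h | h | h | h
        · exact Or.inl (Or.inr (Or.inl ⟨q.1, q'.1, h2.symm, h2'.symm, h⟩))
        · exact Or.inr (Or.inl (Or.inr (Or.inl ⟨q'.1, q.1, h2'.symm, h2.symm, h⟩)))
        · exact Or.inr (Or.inr (Or.inl (Relation.TransGen.single
            (Or.inr ⟨q.1, q'.1, h2.symm, h2'.symm, h⟩))))
        · exact Or.inr (Or.inr (Or.inr (Relation.TransGen.single
            (Or.inr ⟨q'.1, q.1, h2'.symm, h2.symm, h⟩))))
  · -- S minimal
    rintro x ⟨s, hs, rfl⟩ y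
    rintro (⟨a, b, rfl, hx, h⟩ | ⟨a, b, rfl, hx, h⟩ | ⟨a, b, rfl, hx, haT, hbS⟩)
    · exact hPmin s hs a (Sum.inl.inj hx ▸ h)
    · obtain ⟨hb, heq⟩ := inl_eq_iotaQ P Q f hx
      exact hQmin b hb a h
    · rw [iotaQ_of_not_mem P Q f hbS] at hx
      exact absurd hx.symm (by simp)
  · -- T maximal
    rintro x ⟨t, ht, rfl⟩ y
    rintro (⟨a, b, hx, rfl, h⟩ | ⟨a, b, hx, rfl, h⟩ | ⟨a, b, hx, rfl, haT, hbS⟩)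
    · obtain ⟨htS, heq⟩ := inl_eq_iotaQ P Q f hx.symm
      exact hPmax a (heq ▸ (f.symm ⟨t, htS⟩).2) b h
    · have : t = a := iotaQ_inj P Q f hx
      exact hQmax t ht b (this ▸ h)
    · obtain ⟨htS, heq⟩ := inl_eq_iotaQ P Q f hx.symm
      exact haT (heq ▸ (f.symm ⟨t, htS⟩).2)
end

section
/- Every gluing of finitely many discrete ipomsets is an interval ipomset: if P = P_1 * ⋯ * P_m where each P_i has empty precedence order, then the precedence order of P is an interval order. -/
attribute [local instance] Classical.propDecidable

/-- `P` is discrete: the precedence order is empty. -/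
def IsDiscretePom {L : Type} (P : PreIpomset L) : Prop := ∀ x y, ¬ P.lt x y

/-- `P` is a finite gluing of discrete ipomsets (with any bracketing). -/
inductive GluedFromDiscretes {L : Type} : PreIpomset L → Prop
  | disc (P : PreIpomset L) (hP : IsIpomset P) (hd : IsDiscretePom P) :
      GluedFromDiscretes P
  | glue (P Q : PreIpomset L)
      (f : {x : P.car // x ∈ P.T} ≃ {y : Q.car // y ∈ Q.S})
      (hf : GlueOK P Q f)
      (hP : GluedFromDiscretes P) (hQ : GluedFromDiscretes Q) :
      GluedFromDiscretes (glue P Q f)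

lemma iotaQ_eq_inl {L : Type} {P Q : PreIpomset L}
    {f : {x : P.car // x ∈ P.T} ≃ {y : Q.car // y ∈ Q.S}} {b : Q.car} {c : P.car}
    (h : iotaQ P Q f b = Sum.inl c) : ∃ hb : b ∈ Q.S, c = (f.symm ⟨b, hb⟩).1 := by
  unfold iotaQ at h
  split_ifs at h with hb
  exact ⟨hb, (Sum.inl.inj h).symm⟩

lemma iotaQ_injective {L : Type} (P Q : PreIpomset L)
    (f : {x : P.car // x ∈ P.T} ≃ {y : Q.car // y ∈ Q.S}) :
    Function.Injective (iotaQ P Q f) := by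
  intro a b h
  unfold iotaQ at h
  split_ifs at h with ha hb
  · have h1 : f.symm ⟨a, ha⟩ = f.symm ⟨b, hb⟩ := Subtype.ext (Sum.inl.inj h)
    exact congrArg Subtype.val (f.symm.injective h1)
  · exact congrArg Subtype.val (Sum.inr.inj h)

lemma gluedFromDiscretes_aux {L : Type} (P : PreIpomset L)
    (h : GluedFromDiscretes P) :
    IsInterval P ∧ (∀ s ∈ P.S, ∀ y, ¬ P.lt y s) ∧ (∀ t ∈ P.T, ∀ y, ¬ P.lt t y) := by
  induction h with
  | disc P hP hd =>
      exact ⟨fun x y z w hxz _ => absurd hxz (hd _ _),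
        fun s _ y hy => hd _ _ hy, fun t _ y hy => hd _ _ hy⟩
  | glue P Q f hf hP hQ ihP ihQ =>
      obtain ⟨iP, sP, tP⟩ := ihP
      obtain ⟨iQ, sQ, tQ⟩ := ihQ
      have notT : ∀ {a b : P.car}, P.lt a b → a ∉ P.T := fun h ha => tP _ ha _ h
      have notS : ∀ {a b : Q.car}, Q.lt a b → b ∉ Q.S := fun h hb => sQ _ hb _ h
      refine ⟨?_, ?_, ?_⟩
      · intro x y z w hxz hyw
        rcases hxz with ⟨a, b, hx, hz, hab⟩ | ⟨a, b, hx, hz, hab⟩ | ⟨a, b, hx, hz, haT, hbS⟩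
        · rcases hyw with ⟨c, d, hy, hw, hcd⟩ | ⟨c, d, hy, hw, hcd⟩ | ⟨c, d, hy, hw, hcT, hdS⟩
          · rcases iP a c b d hab hcd with h' | h'
            · exact Or.inl (Or.inl ⟨a, d, hx, hw, h'⟩)
            · exact Or.inr (Or.inl ⟨c, b, hy, hz, h'⟩)
          · exact Or.inl (Or.inr (Or.inr ⟨a, d, hx, hw, notT hab, notS hcd⟩))
          · exact Or.inl (Or.inr (Or.inr ⟨a, d, hx, hw, notT hab, hdS⟩))
        · rcases hyw with ⟨c, d, hy, hw, hcd⟩ | ⟨c, d, hy, hw, hcd⟩ | ⟨c, d, hy, hw, hcT, hdS⟩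
          · exact Or.inr (Or.inr (Or.inr ⟨c, b, hy, hz, notT hcd, notS hab⟩))
          · rcases iQ a c b d hab hcd with h' | h'
            · exact Or.inl (Or.inr (Or.inl ⟨a, d, hx, hw, h'⟩))
            · exact Or.inr (Or.inr (Or.inl ⟨c, b, hy, hz, h'⟩))
          · exact Or.inr (Or.inr (Or.inr ⟨c, b, hy, hz, hcT, notS hab⟩))
        · rcases hyw with ⟨c, d, hy, hw, hcd⟩ | ⟨c, d, hy, hw, hcd⟩ | ⟨c, d, hy, hw, hcT, hdS⟩
          · exact Or.inr (Or.inr (Or.inr ⟨c, b, hy, hz, notT hcd, hbS⟩))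
          · exact Or.inl (Or.inr (Or.inr ⟨a, d, hx, hw, haT, notS hcd⟩))
          · exact Or.inl (Or.inr (Or.inr ⟨a, d, hx, hw, haT, hdS⟩))
      · rintro s ⟨s0, hs0, rfl⟩ y hy
        rcases hy with ⟨a, b, hx, hz, hab⟩ | ⟨a, b, hx, hz, hab⟩ | ⟨a, b, hx, hz, haT, hbS⟩
        · exact sP s0 hs0 a (Sum.inl.inj hz ▸ hab)
        · obtain ⟨hb, -⟩ := iotaQ_eq_inl hz.symm
          exact notS hab hb
        · obtain ⟨hb, -⟩ := iotaQ_eq_inl hz.symm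
          exact hbS hb
      · rintro t ⟨t0, ht0, rfl⟩ y hy
        rcases hy with ⟨a, b, hx, hz, hab⟩ | ⟨a, b, hx, hz, hab⟩ | ⟨a, b, hx, hz, haT, hbS⟩
        · obtain ⟨ht, hc⟩ := iotaQ_eq_inl hx
          exact notT hab (hc ▸ (f.symm ⟨t0, ht⟩).2)
        · have : a = t0 := iotaQ_injective P Q f hx.symm
          exact tQ t0 ht0 b (this ▸ hab)
        · obtain ⟨ht, hc⟩ := iotaQ_eq_inl hx
          exact haT (hc ▸ (f.symm ⟨t0, ht⟩).2)

/-- Every gluing of finitely many discrete ipomsets is an interval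
ipomset: if `P = P₁ * ⋯ * P_m` where each `P_i` has empty precedence order, then
the precedence order of `P` is an interval order. -/
theorem gluedFromDiscretes_isInterval {L : Type} (P : PreIpomset L)
    (h : GluedFromDiscretes P) : IsInterval P := by
  exact (gluedFromDiscretes_aux P h).1
end

section
/- The minimal discrete decomposition of an interval ipomset is unique: if P is an interval ipomset, then the decomposition P = P_1 * ⋯ * P_m in which the underlying sets Q_i of the P_i are exactly the maximal antichains of P (linearly ordered Q_1 ≺ ⋯ ≺ Q_m), S_1 = S_P, T_m = T_P, and T_i = S_{i+1} = P_i ∩ P_{i+1}, is uniquely determined by P. -/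
/-- `Q` is a maximal antichain for `lt`. -/
def IsMaxLtAntichain {P : Type} (lt : P → P → Prop) (Q : Set P) : Prop :=
  IsLtAntichain lt Q ∧ ∀ R : Set P, IsLtAntichain lt R → Q ⊆ R → Q = R

/-- The data `(m, Q, Sf, Tf)` is a minimal discrete decomposition of the
ipomset `(P, lt, S, T)`: there are `m` discrete pieces, supported on the sets
`Q i`, which are exactly the maximal antichains of `lt` listed in `≺`-order;
the source interface of the first piece is `S`, the target interface of the
last piece is `T`, and consecutive interfaces are the intersections
`Q i ∩ Q (i+1)`. -/
def IsMinDecomp {P : Type} (lt : P → P → Prop) (S T : Set P)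
    (m : ℕ) (Q Sf Tf : Fin m → Set P) : Prop :=
  0 < m ∧
  (∀ i, IsMaxLtAntichain lt (Q i)) ∧
  (∀ U : Set P, IsMaxLtAntichain lt U → ∃ i, U = Q i) ∧
  (∀ i j : Fin m, i < j → achPrec lt (Q i) (Q j)) ∧
  (∀ h0 : 0 < m, Sf ⟨0, h0⟩ = S) ∧
  (∀ hm : m - 1 < m, Tf ⟨m - 1, hm⟩ = T) ∧
  (∀ (i : Fin m) (h : i.1 + 1 < m),
    Tf i = Q i ∩ Q ⟨i.1 + 1, h⟩ ∧ Sf ⟨i.1 + 1, h⟩ = Q i ∩ Q ⟨i.1 + 1, h⟩)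

/-- Two maximal antichains cannot precede each other both ways. -/
lemma achPrec_asymm {P : Type} (lt : P → P → Prop) {U T : Set P}
    (hU : IsMaxLtAntichain lt U) (hT : IsMaxLtAntichain lt T)
    (h1 : achPrec lt U T) (h2 : achPrec lt T U) : False := by
  have hUT : IsLtAntichain lt (U ∪ T) := by
    intro x hx y hy hxy
    rcases hx with hx | hx <;> rcases hy with hy | hy
    · exact hU.1 x hx y hy hxy
    · exact ⟨h2.2 y hy x hx, h1.2 x hx y hy⟩
    · exact ⟨h1.2 y hy x hx, h2.2 x hx y hy⟩
    · exact hT.1 x hx y hy hxy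
  have e1 := hU.2 (U ∪ T) hUT Set.subset_union_left
  have e2 := hT.2 (U ∪ T) hUT Set.subset_union_right
  exact h1.1 (e1.trans e2.symm)

/-- The minimal discrete decomposition of an interval ipomset is
unique: any two minimal discrete decompositions of the same interval ipomset
have the same length and the same pieces and interfaces. -/
theorem minDecomp_unique
    {L P : Type} [Finite P]
    (lt eo : P → P → Prop) (lab : P → L) (S T : Set P)
    (hlt_irr : ∀ x, ¬ lt x x) (hlt_tr : ∀ x y z, lt x y → lt y z → lt x z)
    (heo_irr : ∀ x, ¬ eo x x) (heo_tr : ∀ x y z, eo x y → eo y z → eo x z)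
    (htot : ∀ x y : P, x ≠ y → lt x y ∨ lt y x ∨ eo x y ∨ eo y x)
    (hS : ∀ x ∈ S, ∀ y, ¬ lt y x) (hT : ∀ x ∈ T, ∀ y, ¬ lt x y)
    (hinterval : ∀ x y z w, lt x z → lt y w → lt x w ∨ lt y z)
    (m₁ m₂ : ℕ) (Q₁ Sf₁ Tf₁ : Fin m₁ → Set P) (Q₂ Sf₂ Tf₂ : Fin m₂ → Set P)
    (h₁ : IsMinDecomp lt S T m₁ Q₁ Sf₁ Tf₁)
    (h₂ : IsMinDecomp lt S T m₂ Q₂ Sf₂ Tf₂) :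
    m₁ = m₂ ∧
    ∀ (i : ℕ) (hi₁ : i < m₁) (hi₂ : i < m₂),
      Q₁ ⟨i, hi₁⟩ = Q₂ ⟨i, hi₂⟩ ∧ Sf₁ ⟨i, hi₁⟩ = Sf₂ ⟨i, hi₂⟩ ∧
      Tf₁ ⟨i, hi₁⟩ = Tf₂ ⟨i, hi₂⟩ := by
  obtain ⟨hm₁, hmax₁, hall₁, hord₁, hS₁, hT₁, hmid₁⟩ := h₁
  obtain ⟨hm₂, hmax₂, hall₂, hord₂, hS₂, hT₂, hmid₂⟩ := h₂
  have hinj₁ : Function.Injective Q₁ := by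
    intro i j hij
    by_contra hne
    rcases lt_or_gt_of_ne hne with h | h
    · exact (hord₁ i j h).1 hij
    · exact (hord₁ j i h).1 hij.symm
  have hinj₂ : Function.Injective Q₂ := by
    intro i j hij
    by_contra hne
    rcases lt_or_gt_of_ne hne with h | h
    · exact (hord₂ i j h).1 hij
    · exact (hord₂ j i h).1 hij.symm
  choose f hf using fun i : Fin m₁ => hall₂ _ (hmax₁ i)
  choose g hg using fun j : Fin m₂ => hall₁ _ (hmax₂ j)
  have hfmono : StrictMono f := by
    intro i j hij
    have h1 : achPrec lt (Q₂ (f i)) (Q₂ (f j)) := by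
      rw [← hf i, ← hf j]; exact hord₁ i j hij
    rcases lt_trichotomy (f i) (f j) with h | h | h
    · exact h
    · exact absurd (congrArg Q₂ h) h1.1
    · exact absurd (hord₂ _ _ h) fun h2 =>
        achPrec_asymm lt (hmax₂ (f j)) (hmax₂ (f i)) h2 h1
  have hfsurj : Function.Surjective f := by
    intro j
    refine ⟨g j, hinj₂ ?_⟩
    rw [← hf (g j), ← hg j]
  have hmeq : m₁ = m₂ := by
    have := Fintype.card_of_bijective ⟨hfmono.injective, hfsurj⟩
    simpa using this
  subst hmeq
  have hfid : f = id := by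
    refine (hfmono.range_inj strictMono_id).mp ?_
    rw [Set.range_id, Set.range_eq_univ.mpr hfsurj]
  have hQ : ∀ i, Q₁ i = Q₂ i := by
    intro i
    rw [hf i, hfid]; rfl
  refine ⟨rfl, fun i hi₁ hi₂ => ?_⟩
  have hQi : Q₁ ⟨i, hi₁⟩ = Q₂ ⟨i, hi₂⟩ := hQ _
  refine ⟨hQi, ?_, ?_⟩
  · rcases Nat.eq_zero_or_pos i with h0 | h0
    · subst h0
      rw [hS₁ hm₁, hS₂ hm₂]
    · obtain ⟨k, rfl⟩ := Nat.exists_eq_succ_of_ne_zero h0.ne'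
      have hk : k < m₁ := Nat.lt_of_succ_lt hi₁
      have e1 := (hmid₁ ⟨k, hk⟩ hi₁).2
      have e2 := (hmid₂ ⟨k, hk⟩ hi₂).2
      rw [e1, e2, hQ, hQ]
  · rcases Nat.lt_or_ge (i + 1) m₁ with h0 | h0
    · have e1 := (hmid₁ ⟨i, hi₁⟩ h0).1
      have e2 := (hmid₂ ⟨i, hi₂⟩ h0).1
      rw [e1, e2, hQ, hQ]
    · have : i = m₁ - 1 := by omega
      subst this
      rw [hT₁ hi₁, hT₂ hi₂]
end

section
/- If Q and R are composable interval ipomsets, then the track object of their gluing is the gluing (pushout) of their track objects: □^{Q*R} = □^Q * □^R, where □^Q * □^R is the colimit of □^R ← □^U → □^Q along the initial inclusion of □^U into □^R and final inclusion of □^U into □^Q, for U ≅ T_Q ≅ S_R. -/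
attribute [local instance] Classical.propDecidable

/-- `P` is discrete: the precedence order is empty. -/
def IsDiscreteIpom {L : Type} (P : PreIpomset L) : Prop := ∀ x y, ¬ P.lt x y

/-- The `ε`-component of a composition: `η(u) = ε (g⁻¹ u)` for `u ∈ g(Q)`,
and `η(u) = ζ u` otherwise. -/
noncomputable def compEps {A B : Type} (g : A → B) (ε : A → Tri) (ζ : B → Tri) : B → Tri :=
  fun b => if h : ∃ a, g a = b then ε h.choose else ζ b

/-- The relation `≼_ipom = {(1,1),(0,0),(ex,ex),(1,ex),(1,0),(ex,0)}`. -/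
def ipomRel : Tri → Tri → Prop := fun a b =>
  (a = Tri.one ∧ b = Tri.one) ∨ (a = Tri.zero ∧ b = Tri.zero) ∨
  (a = Tri.ex ∧ b = Tri.ex) ∨ (a = Tri.one ∧ b = Tri.ex) ∨
  (a = Tri.one ∧ b = Tri.zero) ∨ (a = Tri.ex ∧ b = Tri.zero)

/-- `x` and `y` are concurrent (incomparable for the precedence order). -/
def IpomPar {L : Type} (P : PreIpomset L) (x y : P.car) : Prop :=
  x ≠ y ∧ ¬ P.lt x y ∧ ¬ P.lt y x

/-- `(f, ε)` is a morphism of (interval) ipomsets from `P` to `Q`: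
`f` is injective, reflects the precedence order, preserves the essential event
order, and `ε : Q → {0, ex, 1}` satisfies `ε⁻¹(ex) = f(P)` and is compatible
with the precedence order via `≼_ipom`. -/
def IsIPHom {L : Type} (P Q : PreIpomset L) (f : P.car → Q.car) (ε : Q.car → Tri) : Prop :=
  Function.Injective f ∧
  (∀ x y, Q.lt (f x) (f y) → P.lt x y) ∧
  (∀ x y, IpomPar P x y → P.eo x y → Q.eo (f x) (f y)) ∧
  (∀ q, ε q = Tri.ex ↔ q ∈ Set.range f) ∧
  (∀ q q', Q.lt q q' → ipomRel (ε q) (ε q'))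

/-- The interface conclist of the gluing `Q * R`, i.e. the discrete ipomset on
`S_R ≅ T_Q`, with full interfaces. -/
def interfaceOb {L : Type} (R : PreIpomset L) : PreIpomset L where
  car := {r : R.car // r ∈ R.S}
  lt := fun _ _ => False
  eo := fun a b => R.eo a.1 b.1
  lab := fun a => R.lab a.1
  S := Set.univ
  T := Set.univ

/-- Function part of the initial inclusion `U → R` of the interface. -/
def uInMap {L : Type} (R : PreIpomset L) : (interfaceOb R).car → R.car := Subtype.val

/-- `ε`-part of the initial inclusion `U → R` (events outside `S_R` unstarted). -/
noncomputable def uInEps {L : Type} (R : PreIpomset L) : R.car → Tri :=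
  fun r => if r ∈ R.S then Tri.ex else Tri.zero

/-- Function part of the final inclusion `U → Q` of the interface. -/
noncomputable def uFinMap {L : Type} (Q R : PreIpomset L)
    (g : {x : Q.car // x ∈ Q.T} ≃ {y : R.car // y ∈ R.S}) :
    (interfaceOb R).car → Q.car := fun u => (g.symm u).1

/-- `ε`-part of the final inclusion `U → Q` (events outside `T_Q` terminated). -/
noncomputable def uFinEps {L : Type} (Q : PreIpomset L) : Q.car → Tri :=
  fun q => if q ∈ Q.T then Tri.ex else Tri.one

/-- `ε`-part of the initial inclusion `Q → Q * R`. -/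
def iQeps {L : Type} (Q R : PreIpomset L)
    (g : {x : Q.car // x ∈ Q.T} ≃ {y : R.car // y ∈ R.S}) : (glue Q R g).car → Tri :=
  fun x => match x with
    | Sum.inl _ => Tri.ex
    | Sum.inr _ => Tri.zero

/-- `ε`-part of the final inclusion `R → Q * R`. -/
noncomputable def fReps {L : Type} (Q R : PreIpomset L)
    (g : {x : Q.car // x ∈ Q.T} ≃ {y : R.car // y ∈ R.S}) : (glue Q R g).car → Tri :=
  fun x => if x ∈ Set.range (iotaQ Q R g) then Tri.ex else Tri.one

/-- The track object `□^{Q*R}` is the pushout of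
`□^R ← □^U → □^Q` (along the initial inclusion of `□^U` into `□^R` and the
final inclusion of `□^U` into `□^Q`).  Since colimits of presheaves are
computed objectwise, this is expressed on each cell-set
`□^P[V] = hom_IP(V, P)`, for every conclist `V`: the square commutes, the two
legs into `hom(V, Q*R)` are injective and jointly surjective, and their
intersection is exactly the image of `hom(V, U)`. -/
def TrackGluePushout {L : Type} (Q R : PreIpomset L)
    (g : {x : Q.car // x ∈ Q.T} ≃ {y : R.car // y ∈ R.S}) : Prop :=
  ∀ (V : PreIpomset L), IsIpomset V → IsDiscreteIpom V →
    -- the square commutes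
    ((∀ h θ, IsIPHom V (interfaceOb R) h θ →
      ((Sum.inl ∘ (uFinMap Q R g ∘ h) : V.car → (glue Q R g).car)
          = iotaQ Q R g ∘ (uInMap R ∘ h) ∧
        compEps (Sum.inl : Q.car → (glue Q R g).car)
            (compEps (uFinMap Q R g) θ (uFinEps Q)) (iQeps Q R g)
          = compEps (iotaQ Q R g) (compEps (uInMap R) θ (uInEps R)) (fReps Q R g))) ∧
    -- joint surjectivity of the two legs
    (∀ k κ, IsIPHom V (glue Q R g) k κ →
      (∃ h θ, IsIPHom V Q h θ ∧ k = Sum.inl ∘ h ∧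
        κ = compEps (Sum.inl : Q.car → (glue Q R g).car) θ (iQeps Q R g)) ∨
      (∃ h θ, IsIPHom V R h θ ∧ k = iotaQ Q R g ∘ h ∧
        κ = compEps (iotaQ Q R g) θ (fReps Q R g))) ∧
    -- injectivity of the leg through □^Q
    (∀ h θ h' θ', IsIPHom V Q h θ → IsIPHom V Q h' θ' →
      (Sum.inl ∘ h : V.car → (glue Q R g).car) = Sum.inl ∘ h' →
      compEps (Sum.inl : Q.car → (glue Q R g).car) θ (iQeps Q R g)
        = compEps (Sum.inl : Q.car → (glue Q R g).car) θ' (iQeps Q R g) →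
      h = h' ∧ θ = θ') ∧
    -- injectivity of the leg through □^R
    (∀ h θ h' θ', IsIPHom V R h θ → IsIPHom V R h' θ' →
      iotaQ Q R g ∘ h = iotaQ Q R g ∘ h' →
      compEps (iotaQ Q R g) θ (fReps Q R g) = compEps (iotaQ Q R g) θ' (fReps Q R g) →
      h = h' ∧ θ = θ') ∧
    -- the intersection of the legs is the image of □^U
    (∀ hq θq hr θr, IsIPHom V Q hq θq → IsIPHom V R hr θr →
      (Sum.inl ∘ hq : V.car → (glue Q R g).car) = iotaQ Q R g ∘ hr →
      compEps (Sum.inl : Q.car → (glue Q R g).car) θq (iQeps Q R g)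
        = compEps (iotaQ Q R g) θr (fReps Q R g) →
      ∃ h0 θ0, IsIPHom V (interfaceOb R) h0 θ0 ∧
        hq = uFinMap Q R g ∘ h0 ∧ θq = compEps (uFinMap Q R g) θ0 (uFinEps Q) ∧
        hr = uInMap R ∘ h0 ∧ θr = compEps (uInMap R) θ0 (uInEps R)))

namespace TrackAux

lemma compEps_eq {A B : Type} {f : A → B} (hf : Function.Injective f)
    (ε : A → Tri) (ζ : B → Tri) (a : A) : compEps f ε ζ (f a) = ε a := by
  unfold compEps
  rw [dif_pos ⟨a, rfl⟩]
  exact congrArg ε (hf (⟨a, rfl⟩ : ∃ x, f x = f a).choose_spec)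

lemma compEps_not {A B : Type} {f : A → B} {b : B} (h : ¬ ∃ a, f a = b)
    (ε : A → Tri) (ζ : B → Tri) : compEps f ε ζ b = ζ b := dif_neg h

variable {L : Type} (Q R : PreIpomset L) (g : {x : Q.car // x ∈ Q.T} ≃ {y : R.car // y ∈ R.S})

lemma iotaQ_mem {r : R.car} (h : r ∈ R.S) :
    iotaQ Q R g r = Sum.inl (g.symm ⟨r, h⟩).1 := dif_pos h

lemma iotaQ_not_mem {r : R.car} (h : r ∉ R.S) :
    iotaQ Q R g r = Sum.inr ⟨r, h⟩ := dif_neg h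

lemma iotaQ_inr (a : {q : R.car // q ∉ R.S}) : iotaQ Q R g a.1 = Sum.inr a := by
  rw [iotaQ_not_mem Q R g a.2]

lemma iotaQ_inl {q : Q.car} (h : q ∈ Q.T) :
    iotaQ Q R g (g ⟨q, h⟩).1 = Sum.inl q := by
  rw [iotaQ_mem Q R g (g ⟨q, h⟩).2]
  have : (⟨(g ⟨q, h⟩).1, (g ⟨q, h⟩).2⟩ : {y : R.car // y ∈ R.S}) = g ⟨q, h⟩ := rfl
  rw [this, Equiv.symm_apply_apply]

lemma iotaQ_inj : Function.Injective (iotaQ Q R g) := by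
  intro a b hab
  by_cases ha : a ∈ R.S <;> by_cases hb : b ∈ R.S
  · rw [iotaQ_mem Q R g ha, iotaQ_mem Q R g hb] at hab
    have := g.symm.injective (Subtype.ext (Sum.inl.inj hab))
    exact congrArg Subtype.val this
  · rw [iotaQ_mem Q R g ha, iotaQ_not_mem Q R g hb] at hab; exact absurd hab (by simp)
  · rw [iotaQ_not_mem Q R g ha, iotaQ_mem Q R g hb] at hab; exact absurd hab (by simp)
  · rw [iotaQ_not_mem Q R g ha, iotaQ_not_mem Q R g hb] at hab
    exact congrArg Subtype.val (Sum.inr.inj hab)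

lemma iotaQ_eq_inl {r : R.car} {q : Q.car} (h : iotaQ Q R g r = Sum.inl q) :
    ∃ hq : q ∈ Q.T, r = (g ⟨q, hq⟩).1 := by
  by_cases hr : r ∈ R.S
  · rw [iotaQ_mem Q R g hr] at h
    have hq : q = (g.symm ⟨r, hr⟩).1 := (Sum.inl.inj h).symm
    refine ⟨hq ▸ (g.symm ⟨r, hr⟩).2, ?_⟩
    have : (⟨q, hq ▸ (g.symm ⟨r, hr⟩).2⟩ : {x : Q.car // x ∈ Q.T}) = g.symm ⟨r, hr⟩ :=
      Subtype.ext hq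
    rw [this, Equiv.apply_symm_apply]
  · rw [iotaQ_not_mem Q R g hr] at h; exact absurd h (by simp)

lemma inl_mem_range_iotaQ {q : Q.car} :
    Sum.inl q ∈ Set.range (iotaQ Q R g) ↔ q ∈ Q.T := by
  constructor
  · rintro ⟨r, hr⟩
    obtain ⟨hq, -⟩ := iotaQ_eq_inl Q R g hr
    exact hq
  · intro h; exact ⟨_, iotaQ_inl Q R g h⟩

end TrackAux
namespace TrackAux
variable {L : Type} (Q R : PreIpomset L) (g : {x : Q.car // x ∈ Q.T} ≃ {y : R.car // y ∈ R.S})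

/-- Characterization of event-order paths in the gluing. -/
def EoChar (x y : (glue Q R g).car) : Prop :=
  (∀ p p', x = Sum.inl p → y = Sum.inl p' → Q.eo p p') ∧
  (∀ a b, x = Sum.inr a → y = Sum.inr b → R.eo a.1 b.1) ∧
  (∀ p b, x = Sum.inl p → y = Sum.inr b →
    ∃ t : {x : Q.car // x ∈ Q.T}, (Q.eo p t.1 ∨ p = t.1) ∧ R.eo (g t).1 b.1) ∧
  (∀ a p', x = Sum.inr a → y = Sum.inl p' →
    ∃ t : {x : Q.car // x ∈ Q.T}, R.eo a.1 (g t).1 ∧ (Q.eo t.1 p' ∨ t.1 = p'))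

lemma eoChar_base (hg : GlueOK Q R g) {x y : (glue Q R g).car}
    (h : (∃ a b, x = Sum.inl a ∧ y = Sum.inl b ∧ Q.eo a b) ∨
      (∃ a b, x = iotaQ Q R g a ∧ y = iotaQ Q R g b ∧ R.eo a b)) :
    EoChar Q R g x y := by
  rcases h with ⟨a, b, rfl, rfl, hab⟩ | ⟨a, b, hx, hy, hab⟩
  · refine ⟨?_, ?_, ?_, ?_⟩ <;> intro u v hu hv <;>
      first
        | (cases hu; cases hv; exact hab)
        | (exact absurd hu (by simp))
        | (exact absurd hv (by simp))
  · by_cases ha : a ∈ R.S <;> by_cases hb : b ∈ R.S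
    · rw [iotaQ_mem Q R g ha] at hx; rw [iotaQ_mem Q R g hb] at hy
      subst hx; subst hy
      have hQeo : Q.eo (g.symm ⟨a, ha⟩).1 (g.symm ⟨b, hb⟩).1 := by
        rw [hg.1]
        simpa [Equiv.apply_symm_apply] using hab
      refine ⟨?_, ?_, ?_, ?_⟩ <;> intro u v hu hv <;>
        first
          | (cases hu; cases hv; exact hQeo)
          | (exact absurd hu (by simp))
          | (exact absurd hv (by simp))
    · rw [iotaQ_mem Q R g ha] at hx; rw [iotaQ_not_mem Q R g hb] at hy
      subst hx; subst hy
      refine ⟨?_, ?_, ?_, ?_⟩ <;> intro u v hu hv <;>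
        first
          | (exact absurd hu (by simp))
          | (exact absurd hv (by simp))
          | skip
      cases hu; cases hv
      refine ⟨g.symm ⟨a, ha⟩, Or.inr rfl, ?_⟩
      simpa [Equiv.apply_symm_apply] using hab
    · rw [iotaQ_not_mem Q R g ha] at hx; rw [iotaQ_mem Q R g hb] at hy
      subst hx; subst hy
      refine ⟨?_, ?_, ?_, ?_⟩ <;> intro u v hu hv <;>
        first
          | (exact absurd hu (by simp))
          | (exact absurd hv (by simp))
          | skip
      cases hu; cases hv
      refine ⟨g.symm ⟨b, hb⟩, ?_, Or.inr rfl⟩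
      simpa [Equiv.apply_symm_apply] using hab
    · rw [iotaQ_not_mem Q R g ha] at hx; rw [iotaQ_not_mem Q R g hb] at hy
      subst hx; subst hy
      refine ⟨?_, ?_, ?_, ?_⟩ <;> intro u v hu hv <;>
        first
          | (cases hu; cases hv; exact hab)
          | (exact absurd hu (by simp))
          | (exact absurd hv (by simp))

lemma eoChar_trans (hg : GlueOK Q R g)
    (htQ : ∀ x y z, Q.eo x y → Q.eo y z → Q.eo x z)
    (htR : ∀ x y z, R.eo x y → R.eo y z → R.eo x z) {x y z : (glue Q R g).car}
    (h1 : EoChar Q R g x y) (h2 : EoChar Q R g y z) : EoChar Q R g x z := by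
  obtain ⟨e11, e12, e13, e14⟩ := h1
  obtain ⟨e21, e22, e23, e24⟩ := h2
  match y with
  | Sum.inl p =>
    refine ⟨?_, ?_, ?_, ?_⟩
    · rintro u v rfl rfl
      exact htQ _ _ _ (e11 u p rfl rfl) (e21 p v rfl rfl)
    · rintro u v rfl rfl
      obtain ⟨t, ht1, ht2⟩ := e14 u p rfl rfl
      obtain ⟨t', ht1', ht2'⟩ := e23 p v rfl rfl
      have hQtt' : Q.eo t.1 t'.1 ∨ t.1 = t'.1 := by
        rcases ht2 with h | h
        · rcases ht1' with h' | h'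
          · exact Or.inl (htQ _ _ _ h h')
          · exact Or.inl (h' ▸ h)
        · rcases ht1' with h' | h'
          · exact Or.inl (h ▸ h')
          · exact Or.inr (h.trans h')
      have hgt : R.eo u.1 (g t').1 := by
        rcases hQtt' with h | h
        · exact htR _ _ _ ht1 ((hg.1 t t').1 h)
        · exact (congrArg (fun s => (g s).1) (Subtype.ext h)) ▸ ht1
      exact htR _ _ _ hgt ht2'
    · rintro u v rfl rfl
      obtain ⟨t', ht1', ht2'⟩ := e23 p v rfl rfl
      have hup : Q.eo u p := e11 u p rfl rfl
      refine ⟨t', ?_, ht2'⟩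
      rcases ht1' with h | h
      · exact Or.inl (htQ _ _ _ hup h)
      · exact Or.inl (h ▸ hup)
    · rintro u v rfl rfl
      obtain ⟨t, ht1, ht2⟩ := e14 u p rfl rfl
      have hpv : Q.eo p v := e21 p v rfl rfl
      refine ⟨t, ht1, ?_⟩
      rcases ht2 with h | h
      · exact Or.inl (htQ _ _ _ h hpv)
      · exact Or.inl (h ▸ hpv)
  | Sum.inr c =>
    refine ⟨?_, ?_, ?_, ?_⟩
    · rintro u v rfl rfl
      obtain ⟨t, ht1, ht2⟩ := e13 u c rfl rfl
      obtain ⟨t', ht1', ht2'⟩ := e24 c v rfl rfl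
      have hRtt' : R.eo (g t).1 (g t').1 := htR _ _ _ ht2 ht1'
      have hQtt' : Q.eo t.1 t'.1 := (hg.1 t t').2 hRtt'
      rcases ht1 with h | h
      · rcases ht2' with h' | h'
        · exact htQ _ _ _ (htQ _ _ _ h hQtt') h'
        · exact h' ▸ (htQ _ _ _ h hQtt')
      · rcases ht2' with h' | h'
        · exact htQ _ _ _ (h ▸ hQtt') h'
        · exact h' ▸ (h ▸ hQtt')
    · rintro u v rfl rfl
      exact htR _ _ _ (e12 u c rfl rfl) (e22 c v rfl rfl)
    · rintro u v rfl rfl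
      obtain ⟨t, ht1, ht2⟩ := e13 u c rfl rfl
      exact ⟨t, ht1, htR _ _ _ ht2 (e22 c v rfl rfl)⟩
    · rintro u v rfl rfl
      obtain ⟨t', ht1', ht2'⟩ := e24 c v rfl rfl
      exact ⟨t', htR _ _ _ (e12 u c rfl rfl) ht1', ht2'⟩

lemma glue_eo_char (hg : GlueOK Q R g)
    (htQ : ∀ x y z, Q.eo x y → Q.eo y z → Q.eo x z)
    (htR : ∀ x y z, R.eo x y → R.eo y z → R.eo x z) {x y : (glue Q R g).car} (h : (glue Q R g).eo x y) :
    EoChar Q R g x y := by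
  induction h with
  | single h => exact eoChar_base Q R g hg h
  | tail _ hstep ih => exact eoChar_trans Q R g hg htQ htR ih (eoChar_base Q R g hg hstep)

lemma glue_eo_inl_inl (hg : GlueOK Q R g)
    (htQ : ∀ x y z, Q.eo x y → Q.eo y z → Q.eo x z)
    (htR : ∀ x y z, R.eo x y → R.eo y z → R.eo x z) {q q' : Q.car}
    (h : (glue Q R g).eo (Sum.inl q) (Sum.inl q')) : Q.eo q q' :=
  (glue_eo_char Q R g hg htQ htR h).1 q q' rfl rfl

lemma glue_eo_iota (hg : GlueOK Q R g)
    (htQ : ∀ x y z, Q.eo x y → Q.eo y z → Q.eo x z)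
    (htR : ∀ x y z, R.eo x y → R.eo y z → R.eo x z) {a b : R.car}
    (h : (glue Q R g).eo (iotaQ Q R g a) (iotaQ Q R g b)) : R.eo a b := by
  have hc := glue_eo_char Q R g hg htQ htR h
  by_cases ha : a ∈ R.S <;> by_cases hb : b ∈ R.S
  · have hQ := hc.1 _ _ (iotaQ_mem Q R g ha) (iotaQ_mem Q R g hb)
    have := (hg.1 (g.symm ⟨a, ha⟩) (g.symm ⟨b, hb⟩)).1 hQ
    simpa [Equiv.apply_symm_apply] using this
  · obtain ⟨t, ht1, ht2⟩ := hc.2.2.1 _ _ (iotaQ_mem Q R g ha) (iotaQ_not_mem Q R g hb)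
    rcases ht1 with h' | h'
    · have : R.eo a (g t).1 := by
        have := (hg.1 (g.symm ⟨a, ha⟩) t).1 h'
        simpa [Equiv.apply_symm_apply] using this
      exact htR _ _ _ this ht2
    · have hgt : g t = ⟨a, ha⟩ := by
        have := congrArg g (Subtype.ext h' : g.symm ⟨a, ha⟩ = t)
        rw [Equiv.apply_symm_apply] at this; exact this.symm
      have : (g t).1 = a := congrArg Subtype.val hgt
      exact this ▸ ht2
  · obtain ⟨t, ht1, ht2⟩ := hc.2.2.2 _ _ (iotaQ_not_mem Q R g ha) (iotaQ_mem Q R g hb)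
    rcases ht2 with h' | h'
    · have : R.eo (g t).1 b := by
        have := (hg.1 t (g.symm ⟨b, hb⟩)).1 h'
        simpa [Equiv.apply_symm_apply] using this
      exact htR _ _ _ ht1 this
    · have hgt : g t = ⟨b, hb⟩ := by
        have := congrArg g (Subtype.ext h' : t = g.symm ⟨b, hb⟩)
        rw [Equiv.apply_symm_apply] at this; exact this
      have : (g t).1 = b := congrArg Subtype.val hgt
      exact this ▸ ht1
  · exact hc.2.1 _ _ (iotaQ_not_mem Q R g ha) (iotaQ_not_mem Q R g hb)

lemma glue_lt_inl {a b : Q.car} (h : Q.lt a b) :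
    (glue Q R g).lt (Sum.inl a) (Sum.inl b) := Or.inl ⟨a, b, rfl, rfl, h⟩

lemma glue_lt_iota {a b : R.car} (h : R.lt a b) :
    (glue Q R g).lt (iotaQ Q R g a) (iotaQ Q R g b) := Or.inr (Or.inl ⟨a, b, rfl, rfl, h⟩)

lemma glue_lt_mixed {a : Q.car} {b : R.car} (ha : a ∉ Q.T) (hb : b ∉ R.S) :
    (glue Q R g).lt (Sum.inl a) (iotaQ Q R g b) := Or.inr (Or.inr ⟨a, b, rfl, rfl, ha, hb⟩)

end TrackAux
namespace TrackAux
variable {L : Type} (Q R : PreIpomset L) (g : {x : Q.car // x ∈ Q.T} ≃ {y : R.car // y ∈ R.S})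

lemma compEps_inl (ε : Q.car → Tri) (q : Q.car) :
    compEps (Sum.inl : Q.car → (glue Q R g).car) ε (iQeps Q R g) (Sum.inl q) = ε q :=
  compEps_eq Sum.inl_injective ε _ q

lemma compEps_inl_inr (ε : Q.car → Tri) (a : {q : R.car // q ∉ R.S}) :
    compEps (Sum.inl : Q.car → (glue Q R g).car) ε (iQeps Q R g) (Sum.inr a) = Tri.zero := by
  refine (compEps_not (B := (glue Q R g).car) (by rintro ⟨a', h⟩; exact absurd h (by simp)) ε (iQeps Q R g)).trans ?_
  rfl

lemma compEps_iota (ε : R.car → Tri) (r : R.car) :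
    compEps (iotaQ Q R g) ε (fReps Q R g) (iotaQ Q R g r) = ε r :=
  compEps_eq (iotaQ_inj Q R g) ε _ r

lemma compEps_iota_inl (ε : R.car → Tri) {q : Q.car} (hq : q ∉ Q.T) :
    compEps (iotaQ Q R g) ε (fReps Q R g) (Sum.inl q) = Tri.one := by
  have hnr : Sum.inl q ∉ Set.range (iotaQ Q R g) := fun h =>
    hq ((inl_mem_range_iotaQ Q R g).1 h)
  refine (compEps_not (B := (glue Q R g).car) hnr ε (fReps Q R g)).trans ?_
  unfold fReps
  exact if_neg hnr

lemma compEps_ufin (θ : (interfaceOb R).car → Tri) {q : Q.car} (hq : q ∈ Q.T) :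
    compEps (uFinMap Q R g) θ (uFinEps Q) q = θ (g ⟨q, hq⟩) := by
  have h1 : uFinMap Q R g (g ⟨q, hq⟩) = q := by
    show (g.symm (g ⟨q, hq⟩)).1 = q
    rw [Equiv.symm_apply_apply]
  conv_lhs => rw [← h1]
  exact compEps_eq (fun u u' huu => g.symm.injective (Subtype.ext huu)) θ _ _

lemma compEps_ufin_not (θ : (interfaceOb R).car → Tri) {q : Q.car} (hq : q ∉ Q.T) :
    compEps (uFinMap Q R g) θ (uFinEps Q) q = Tri.one := by
  rw [compEps_not (by rintro ⟨u, hu⟩; exact hq (hu ▸ (g.symm u).2))]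
  unfold uFinEps
  rw [if_neg hq]

lemma compEps_uin (θ : (interfaceOb R).car → Tri) {r : R.car} (hr : r ∈ R.S) :
    compEps (uInMap R) θ (uInEps R) r = θ ⟨r, hr⟩ :=
  compEps_eq (fun u u' huu => Subtype.ext huu) θ _ ⟨r, hr⟩

lemma compEps_uin_not (θ : (interfaceOb R).car → Tri) {r : R.car} (hr : r ∉ R.S) :
    compEps (uInMap R) θ (uInEps R) r = Tri.zero := by
  rw [compEps_not (by rintro ⟨u, hu⟩; exact hr (hu ▸ u.2))]
  unfold uInEps
  rw [if_neg hr]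

end TrackAux
/-- If `Q` and `R` are composable interval ipomsets, then the
track object of their gluing is the gluing (pushout) of their track objects:
`□^{Q*R} = □^Q * □^R`, the colimit of `□^R ← □^U → □^Q` along the initial
inclusion of `□^U` into `□^R` and the final inclusion of `□^U` into `□^Q`,
where `U ≅ T_Q ≅ S_R` is the interface conclist. -/
theorem track_of_glue_is_pushout {L : Type} (Q R : PreIpomset L)
    (hQ : IsIpomset Q) (hR : IsIpomset R)
    (hQi : IsInterval Q) (hRi : IsInterval R)
    (g : {x : Q.car // x ∈ Q.T} ≃ {y : R.car // y ∈ R.S})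
    (hg : GlueOK Q R g) :
    TrackGluePushout Q R g := by
  have htQ : ∀ x y z, Q.eo x y → Q.eo y z → Q.eo x z := hQ.2.2.2.2.1
  have htR : ∀ x y z, R.eo x y → R.eo y z → R.eo x z := hR.2.2.2.2.1
  intro V hV hVd
  refine ⟨?_, ?_, ?_, ?_, ?_⟩
  -- Part 1: the square commutes
  · intro f0 θ0 _
    refine ⟨?_, ?_⟩
    · funext v
      show Sum.inl (uFinMap Q R g (f0 v)) = iotaQ Q R g (uInMap R (f0 v))
      exact (TrackAux.iotaQ_mem Q R g (f0 v).2).symm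
    · funext x
      cases x with
      | inl q =>
        rw [TrackAux.compEps_inl]
        by_cases hq : q ∈ Q.T
        · rw [TrackAux.compEps_ufin Q R g _ hq, ← TrackAux.iotaQ_inl Q R g hq,
            TrackAux.compEps_iota, TrackAux.compEps_uin R _ (g ⟨q, hq⟩).2]
        · rw [TrackAux.compEps_ufin_not Q R g _ hq, TrackAux.compEps_iota_inl Q R g _ hq]
      | inr a =>
        rw [TrackAux.compEps_inl_inr, ← TrackAux.iotaQ_inr Q R g a,
          TrackAux.compEps_iota, TrackAux.compEps_uin_not R _ a.2]
  -- Part 2: joint surjectivity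
  · intro k κ hk
    obtain ⟨hkinj, hkref, hkeo, hkex, hkrel⟩ := hk
    by_cases hcase : ∀ a : {q : R.car // q ∉ R.S}, κ (Sum.inr a) = Tri.zero
    · left
      have hex : ∀ v, ∃ q, k v = Sum.inl q := by
        intro v
        cases hkv : k v with
        | inl q => exact ⟨q, rfl⟩
        | inr a =>
          have h1 : κ (Sum.inr a) = Tri.ex := (hkex _).2 ⟨v, hkv⟩
          rw [hcase a] at h1
          exact absurd h1 (by simp)
      choose h hspec using hex
      refine ⟨h, fun q => κ (Sum.inl q), ⟨?_, ?_, ?_, ?_, ?_⟩, funext hspec, ?_⟩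
      · intro v v' hvv
        apply hkinj
        rw [hspec v, hspec v', hvv]
      · intro x y hxy
        apply hkref
        rw [hspec x, hspec y]
        exact TrackAux.glue_lt_inl Q R g hxy
      · intro x y hpar heo
        have h1 := hkeo x y hpar heo
        rw [hspec x, hspec y] at h1
        exact TrackAux.glue_eo_inl_inl Q R g hg htQ htR h1
      · intro q
        constructor
        · intro hq
          obtain ⟨v, hv⟩ := (hkex _).1 hq
          rw [hspec v] at hv
          exact ⟨v, Sum.inl_injective hv⟩
        · rintro ⟨v, rfl⟩
          exact (hkex _).2 ⟨v, hspec v⟩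
      · intro q q' hlt
        exact hkrel _ _ (TrackAux.glue_lt_inl Q R g hlt)
      · funext x
        cases x with
        | inl q => rw [TrackAux.compEps_inl]
        | inr a => rw [TrackAux.compEps_inl_inr]; exact hcase a
    · right
      push_neg at hcase
      obtain ⟨a₀, ha₀⟩ := hcase
      have key : ∀ q, q ∉ Q.T → κ (Sum.inl q) = Tri.one := by
        intro q hq
        have hlt : (glue Q R g).lt (Sum.inl q) (Sum.inr a₀) := by
          have h1 := TrackAux.glue_lt_mixed Q R g hq a₀.2
          rwa [TrackAux.iotaQ_inr Q R g a₀] at h1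
        rcases hkrel _ _ hlt with ⟨h1, h2⟩ | ⟨h1, h2⟩ | ⟨h1, h2⟩ | ⟨h1, h2⟩ | ⟨h1, h2⟩ | ⟨h1, h2⟩
        · exact h1
        · exact absurd h2 ha₀
        · exfalso
          obtain ⟨v, hv⟩ := (hkex _).1 h1
          obtain ⟨v', hv'⟩ := (hkex _).1 h2
          exact hVd v v' (hkref v v' (by rw [hv, hv']; exact hlt))
        · exact h1
        · exact h1
        · exact absurd h2 ha₀
      have hex : ∀ v, ∃ r, iotaQ Q R g r = k v := by
        intro v
        cases hkv : k v with
        | inl q =>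
          by_cases hq : q ∈ Q.T
          · exact ⟨_, TrackAux.iotaQ_inl Q R g hq⟩
          · have h1 : κ (Sum.inl q) = Tri.ex := (hkex _).2 ⟨v, hkv⟩
            rw [key q hq] at h1
            exact absurd h1 (by simp)
        | inr a => exact ⟨a.1, TrackAux.iotaQ_inr Q R g a⟩
      choose h hspec using hex
      refine ⟨h, fun r => κ (iotaQ Q R g r), ⟨?_, ?_, ?_, ?_, ?_⟩, ?_, ?_⟩
      · intro v v' hvv
        apply hkinj
        rw [← hspec v, ← hspec v', hvv]
      · intro x y hxy
        apply hkref
        rw [← hspec x, ← hspec y]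
        exact TrackAux.glue_lt_iota Q R g hxy
      · intro x y hpar heo
        have h1 := hkeo x y hpar heo
        rw [← hspec x, ← hspec y] at h1
        exact TrackAux.glue_eo_iota Q R g hg htQ htR h1
      · intro r
        constructor
        · intro hr
          obtain ⟨v, hv⟩ := (hkex _).1 hr
          rw [← hspec v] at hv
          exact ⟨v, TrackAux.iotaQ_inj Q R g hv⟩
        · rintro ⟨v, rfl⟩
          exact (hkex _).2 ⟨v, (hspec v).symm⟩
      · intro r r' hlt
        exact hkrel _ _ (TrackAux.glue_lt_iota Q R g hlt)
      · funext v
        exact (hspec v).symm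
      · funext x
        by_cases hx : ∃ r, iotaQ Q R g r = x
        · obtain ⟨r, rfl⟩ := hx
          rw [TrackAux.compEps_iota]
        · cases x with
          | inl q =>
            have hq : q ∉ Q.T := fun hq => hx ⟨_, TrackAux.iotaQ_inl Q R g hq⟩
            rw [TrackAux.compEps_iota_inl Q R g _ hq]
            exact key q hq
          | inr a => exact absurd ⟨a.1, TrackAux.iotaQ_inr Q R g a⟩ hx
  -- Part 3: injectivity of the Q-leg
  · intro h θ h' θ' _ _ hmap heps
    constructor
    · funext v
      exact Sum.inl_injective (congrFun hmap v)
    · funext q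
      have h1 := congrFun heps (Sum.inl q)
      rwa [TrackAux.compEps_inl, TrackAux.compEps_inl] at h1
  -- Part 4: injectivity of the R-leg
  · intro h θ h' θ' _ _ hmap heps
    constructor
    · funext v
      exact TrackAux.iotaQ_inj Q R g (congrFun hmap v)
    · funext r
      have h1 := congrFun heps (iotaQ Q R g r)
      rwa [TrackAux.compEps_iota, TrackAux.compEps_iota] at h1
  -- Part 5: intersection of the legs
  · intro hq θq hr θr hhq hhr hmap heps
    have hmem : ∀ v, hr v ∈ R.S := by
      intro v
      by_cases h2 : hr v ∈ R.S
      · exact h2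
      · have h1 := congrFun hmap v
        change (Sum.inl (hq v) : Q.car ⊕ {q : R.car // q ∉ R.S}) = iotaQ Q R g (hr v) at h1
        rw [TrackAux.iotaQ_not_mem Q R g h2] at h1
        exact absurd h1 (by simp)
    have hqv : ∀ v, hq v = (g.symm ⟨hr v, hmem v⟩).1 := by
      intro v
      have h1 := congrFun hmap v
      change (Sum.inl (hq v) : Q.car ⊕ {q : R.car // q ∉ R.S}) = iotaQ Q R g (hr v) at h1
      rw [TrackAux.iotaQ_mem Q R g (hmem v)] at h1
      exact Sum.inl_injective h1
    have hθT : ∀ q (hqT : q ∈ Q.T), θq q = θr (g ⟨q, hqT⟩).1 := by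
      intro q hqT
      have h1 := congrFun heps (Sum.inl q)
      rwa [TrackAux.compEps_inl, ← TrackAux.iotaQ_inl Q R g hqT,
        TrackAux.compEps_iota] at h1
    have hθnT : ∀ q, q ∉ Q.T → θq q = Tri.one := by
      intro q hqT
      have h1 := congrFun heps (Sum.inl q)
      rwa [TrackAux.compEps_inl, TrackAux.compEps_iota_inl Q R g _ hqT] at h1
    have hθrS : ∀ r (hrS : r ∉ R.S), θr r = Tri.zero := by
      intro r hrS
      have h1 := congrFun heps (Sum.inr ⟨r, hrS⟩)
      rw [TrackAux.compEps_inl_inr, ← TrackAux.iotaQ_inr Q R g ⟨r, hrS⟩,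
        TrackAux.compEps_iota] at h1
      exact h1.symm
    refine ⟨fun v => ⟨hr v, hmem v⟩, fun u => θr u.1, ⟨?_, ?_, ?_, ?_, ?_⟩, ?_, ?_, ?_, ?_⟩
    · intro v v' h1
      exact hhr.1 (congrArg Subtype.val h1)
    · intro x y h1
      exact False.elim h1
    · intro x y hpar heo
      exact hhr.2.2.1 x y hpar heo
    · intro u
      constructor
      · intro hu
        obtain ⟨v, hv⟩ := (hhr.2.2.2.1 u.1).1 hu
        exact ⟨v, Subtype.ext hv⟩
      · rintro ⟨v, rfl⟩
        exact (hhr.2.2.2.1 (hr v)).2 ⟨v, rfl⟩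
    · intro u u' h1
      exact False.elim h1
    · funext v
      exact hqv v
    · funext q
      by_cases hqT : q ∈ Q.T
      · rw [hθT q hqT, TrackAux.compEps_ufin Q R g _ hqT]
      · rw [hθnT q hqT, TrackAux.compEps_ufin_not Q R g _ hqT]
    · funext v
      rfl
    · funext r
      by_cases hrS : r ∈ R.S
      · rw [TrackAux.compEps_uin R _ hrS]
      · rw [hθrS r hrS, TrackAux.compEps_uin_not R _ hrS]
end
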